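/- For every natural number n there exist polynomials P and Q with integer coefficients, each of degree at most ⌈n/2⌉, such that for every real number r, r · R_n(r) = P(r^2) · r · sin r + Q(r^2) · cos r. -/

import Mathlib

open MeasureTheory intervalIntegral Polynomial

/-- Hermite's integral `R_n(r) = ∫_0^r ((r² - x²)ⁿ / (2ⁿ n!)) cos x dx`. -/
noncomputable def R (n : ℕ) (r : ℝ) : ℝ :=
  ∫ x in (0:ℝ)..r, ((r ^ 2 - x ^ 2) ^ n / (2 ^ n * n.factorial)) * Real.cos x

private lemma hderiv (n : ℕ) (r x : ℝ) :
    HasDerivAt (fun x : ℝ => (r^2-x^2)^(n+2) * Real.sin x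
        - (2*(n:ℝ)+4) * (x * ((r^2-x^2)^(n+1) * Real.cos x)))
      (((r^2-x^2)^(n+2) * Real.cos x)
        - ((2*(n:ℝ)+4)*(2*(n:ℝ)+3) * ((r^2-x^2)^(n+1) * Real.cos x)
          - (2*(n:ℝ)+4)*(2*(n:ℝ)+2)*r^2 * ((r^2-x^2)^n * Real.cos x))) x := by
  have hu : HasDerivAt (fun x : ℝ => r^2 - x^2) (-(2*x)) x := by
    simpa using ((hasDerivAt_pow 2 x).const_sub (r^2))
  have h1 := ((hu.pow (n+2)).mul (Real.hasDerivAt_sin x))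
  have h2 := ((hasDerivAt_id x).mul ((hu.pow (n+1)).mul (Real.hasDerivAt_cos x))).const_mul (2*(n:ℝ)+4)
  exact (h1.sub h2).congr_deriv (by
    simp only [Pi.pow_apply, Pi.mul_apply, id_eq]
    push_cast
    ring)

private lemma cont (k : ℕ) (r : ℝ) :
    Continuous (fun x : ℝ => (r^2-x^2)^k * Real.cos x) := by fun_prop

private lemma Ikey (n : ℕ) (r : ℝ) :
    (∫ x in (0:ℝ)..r, (r^2-x^2)^(n+2) * Real.cos x)
      = (2*(n:ℝ)+4)*(2*(n:ℝ)+3) * (∫ x in (0:ℝ)..r, (r^2-x^2)^(n+1) * Real.cos x)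
        - (2*(n:ℝ)+4)*(2*(n:ℝ)+2) * r^2 * (∫ x in (0:ℝ)..r, (r^2-x^2)^n * Real.cos x) := by
  have hint : IntervalIntegrable (fun x : ℝ =>
      ((r^2-x^2)^(n+2) * Real.cos x)
        - ((2*(n:ℝ)+4)*(2*(n:ℝ)+3) * ((r^2-x^2)^(n+1) * Real.cos x)
          - (2*(n:ℝ)+4)*(2*(n:ℝ)+2)*r^2 * ((r^2-x^2)^n * Real.cos x))) volume 0 r := by
    apply Continuous.intervalIntegrable; fun_prop
  have h0 := intervalIntegral.integral_eq_sub_of_hasDerivAt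
    (fun x _ => hderiv n r x) hint
  have hz : (∫ x in (0:ℝ)..r, (((r^2-x^2)^(n+2) * Real.cos x)
        - ((2*(n:ℝ)+4)*(2*(n:ℝ)+3) * ((r^2-x^2)^(n+1) * Real.cos x)
          - (2*(n:ℝ)+4)*(2*(n:ℝ)+2)*r^2 * ((r^2-x^2)^n * Real.cos x)))) = 0 := by
    rw [h0]; simp
  rw [intervalIntegral.integral_sub ((cont (n+2) r).intervalIntegrable 0 r)
      (IntervalIntegrable.sub (((cont (n+1) r).intervalIntegrable 0 r).const_mul _)
        (((cont n r).intervalIntegrable 0 r).const_mul _)),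
    intervalIntegral.integral_sub (((cont (n+1) r).intervalIntegrable 0 r).const_mul _)
      (((cont n r).intervalIntegrable 0 r).const_mul _),
    intervalIntegral.integral_const_mul, intervalIntegral.integral_const_mul] at hz
  linarith

private lemma R_int (n : ℕ) (r : ℝ) :
    R n r = (∫ x in (0:ℝ)..r, (r^2-x^2)^n * Real.cos x) / (2^n * n.factorial) := by
  unfold R
  simp only [div_mul_eq_mul_div]
  rw [intervalIntegral.integral_div]

private lemma R_rec (n : ℕ) (r : ℝ) :
    R (n+2) r = (2*(n:ℝ)+3) * R (n+1) r - r^2 * R n r := by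
  rw [R_int, R_int, R_int, Ikey]
  have hf : (n.factorial : ℝ) ≠ 0 := Nat.cast_ne_zero.mpr n.factorial_ne_zero
  have h1 : ((n+1).factorial : ℝ) = (n+1) * n.factorial := by
    rw [Nat.factorial_succ]; push_cast; ring
  have h2 : ((n+2).factorial : ℝ) = (n+2) * ((n+1) * n.factorial) := by
    rw [Nat.factorial_succ, Nat.factorial_succ]; push_cast; ring
  rw [h1, h2]
  have hp : (2:ℝ)^n ≠ 0 := by positivity
  have hn1 : ((n:ℝ)+1) ≠ 0 := by positivity
  have hn2 : ((n:ℝ)+2) ≠ 0 := by positivity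
  field_simp
  ring

private lemma R_zero (r : ℝ) : R 0 r = Real.sin r := by
  unfold R
  simp [integral_cos]

private lemma R_one (r : ℝ) : R 1 r = Real.sin r - r * Real.cos r := by
  unfold R
  have h : ∀ x : ℝ, HasDerivAt (fun x : ℝ => (r^2-x^2)/2 * Real.sin x - x * Real.cos x + Real.sin x)
      (((r^2-x^2)^1 / (2^1 * Nat.factorial 1)) * Real.cos x) x := by
    intro x
    have hu : HasDerivAt (fun x : ℝ => (r^2 - x^2)/2) (-(2*x)/2) x := by
      exact (((hasDerivAt_pow 2 x).const_sub (r^2)).div_const 2).congr_deriv (by ring)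
    have h1 := hu.mul (Real.hasDerivAt_sin x)
    have h2 := (hasDerivAt_id x).mul (Real.hasDerivAt_cos x)
    have := (h1.sub h2).add (Real.hasDerivAt_sin x)
    exact this.congr_deriv (by
      simp [Nat.factorial]
      ring)
  rw [intervalIntegral.integral_eq_sub_of_hasDerivAt (fun x _ => h x)
    (by apply Continuous.intervalIntegrable; fun_prop)]
  simp
  ring

theorem R_polynomial_form (n : ℕ) :
    ∃ P Q : Polynomial ℤ, P.natDegree ≤ (n + 1) / 2 ∧ Q.natDegree ≤ (n + 1) / 2 ∧
      ∀ r : ℝ, r * R n r =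
        (Polynomial.aeval (r ^ 2) P) * (r * Real.sin r) +
        (Polynomial.aeval (r ^ 2) Q) * Real.cos r := by
  induction n using Nat.twoStepInduction with
  | zero =>
    refine ⟨1, 0, by simp, by simp, fun r => ?_⟩
    simp [R_zero]
  | one =>
    refine ⟨1, -X, by simp, by simp, fun r => ?_⟩
    simp [R_one]
    ring
  | more n ih0 ih1 =>
    obtain ⟨P0, Q0, hP0d, hQ0d, h0⟩ := ih0
    obtain ⟨P1, Q1, hP1d, hQ1d, h1⟩ := ih1
    refine ⟨C (2*(n:ℤ)+3) * P1 - X * P0, C (2*(n:ℤ)+3) * Q1 - X * Q0, ?_, ?_, fun r => ?_⟩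
    · apply le_trans (natDegree_sub_le _ _)
      apply max_le
      · exact le_trans (natDegree_C_mul_le _ _) (le_trans hP1d (by omega))
      · exact le_trans (natDegree_mul_le) (by simp [natDegree_X]; omega)
    · apply le_trans (natDegree_sub_le _ _)
      apply max_le
      · exact le_trans (natDegree_C_mul_le _ _) (le_trans hQ1d (by omega))
      · exact le_trans (natDegree_mul_le) (by simp [natDegree_X]; omega)
    · have key : r * R (n+2) r = (2*(n:ℝ)+3) * (r * R (n+1) r) - r^2 * (r * R n r) := by
        rw [R_rec]; ring
      rw [key, h0 r, h1 r, map_sub, map_mul, map_mul, aeval_X, aeval_C,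
        map_sub, map_mul, map_mul, aeval_X, aeval_C]
      simp only [algebraMap_int_eq, eq_intCast]
      push_cast
      ring
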